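/- Let H be an n×n Hermitian complex matrix, let β > 0, t_c ≥ 0, Δ ≥ 0, and define K = (4πβ)^{−1/2} · ∫_{−t_c}^{t_c} e^{−t²/(4β)} · exp(−itH) dt. Suppose w ∈ ℂⁿ lies in the linear span of eigenvectors of H whose eigenvalues μ satisfy |μ| ≥ Δ. Then ‖K·w‖ ≤ (e^{−βΔ²} + e^{−t_c²/(4β)})·‖w‖ in the Euclidean norm. In particular, for t_c = 2βΔ, ‖K·w‖ ≤ 2·e^{−βΔ²}·‖w‖. -/

import Mathlib

open scoped Matrix.Norms.L2Operator
open MeasureTheory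

noncomputable def mulVecCLM {n : ℕ} (v : Fin n → ℂ) :
    Matrix (Fin n) (Fin n) ℂ →L[ℂ] (Fin n → ℂ) :=
  LinearMap.toContinuousLinearMap
    { toFun := fun B => B.mulVec v
      map_add' := fun B C => Matrix.add_mulVec B C v
      map_smul' := fun c B => Matrix.smul_mulVec c B v }

lemma mulVecCLM_apply {n : ℕ} (v : Fin n → ℂ) (A : Matrix (Fin n) (Fin n) ℂ) :
    mulVecCLM v A = A.mulVec v := rfl

lemma pow_mulVec_eigen {n : ℕ} {A : Matrix (Fin n) (Fin n) ℂ} {v : Fin n → ℂ} {μ : ℂ}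
    (h : A.mulVec v = μ • v) (k : ℕ) : (A ^ k).mulVec v = μ ^ k • v := by
  induction k with
  | zero => simp [Matrix.one_mulVec]
  | succ k ih =>
    rw [pow_succ, ← Matrix.mulVec_mulVec, h, Matrix.mulVec_smul, ih, smul_smul, pow_succ]
    ring_nf

lemma exp_mulVec_eigen {n : ℕ} {A : Matrix (Fin n) (Fin n) ℂ} {v : Fin n → ℂ} {μ : ℂ}
    (h : A.mulVec v = μ • v) :
    (NormedSpace.exp A).mulVec v = Complex.exp μ • v := by
  have : (NormedSpace.exp A).mulVec v = mulVecCLM v (NormedSpace.exp A) := rfl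
  rw [this, NormedSpace.exp_eq_tsum ℂ,
    (mulVecCLM v).map_tsum (NormedSpace.expSeries_summable' (𝕂 := ℂ) A)]
  have h1 : ∀ k : ℕ, mulVecCLM v ((k.factorial⁻¹ : ℂ) • A ^ k)
      = ((k.factorial⁻¹ : ℂ) * μ ^ k) • v := by
    intro k
    rw [_root_.map_smul, mulVecCLM_apply, pow_mulVec_eigen h, smul_smul]
  simp_rw [h1]
  rw [Summable.tsum_smul_const]
  · congr 1
    rw [Complex.exp_eq_exp_ℂ, NormedSpace.exp_eq_tsum ℂ]
    simp [smul_eq_mul]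
  · have := NormedSpace.expSeries_summable' (𝕂 := ℂ) μ
    simpa [smul_eq_mul] using this

lemma K_mulVec_eigen {n : ℕ} {H : Matrix (Fin n) (Fin n) ℂ}
    (β t_c : ℝ) (hβ : 0 < β)
    {v : Fin n → ℂ} {μ : ℂ} (h : H.mulVec v = μ • v) :
    ((Real.sqrt (4 * Real.pi * β))⁻¹ •
      ∫ t in (-t_c)..t_c, Real.exp (-t ^ 2 / (4 * β)) •
        NormedSpace.exp ((-(t : ℂ) * Complex.I) • H)).mulVec v
    = ((Real.sqrt (4 * Real.pi * β))⁻¹ •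
        ∫ t in (-t_c)..t_c, Real.exp (-t ^ 2 / (4 * β)) •
          Complex.exp (-(t : ℂ) * Complex.I * μ)) • v := by
  have hint : IntervalIntegrable (fun t : ℝ => Real.exp (-t ^ 2 / (4 * β)) •
      NormedSpace.exp ((-(t : ℂ) * Complex.I) • H)) volume (-t_c) t_c := by
    apply Continuous.intervalIntegrable
    apply Continuous.smul (f := fun t : ℝ => Real.exp (-t ^ 2 / (4 * β)))
      (g := fun t : ℝ => NormedSpace.exp ((-(t : ℂ) * Complex.I) • H))
    · fun_prop
    · exact (continuous_iff_continuousAt.2 fun x =>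
        (NormedSpace.exp_analytic (𝕂 := ℂ) x).continuousAt).comp (by fun_prop)
  have key : ∀ t : ℝ, (Real.exp (-t ^ 2 / (4 * β)) •
      NormedSpace.exp ((-(t : ℂ) * Complex.I) • H)).mulVec v
      = (Real.exp (-t ^ 2 / (4 * β)) • Complex.exp (-(t : ℂ) * Complex.I * μ)) • v := by
    intro t
    have he : ((-(t : ℂ) * Complex.I) • H).mulVec v = (-(t : ℂ) * Complex.I * μ) • v := by
      rw [Matrix.smul_mulVec, h, smul_smul]
    rw [← mulVecCLM_apply, ContinuousLinearMap.map_smul_of_tower, mulVecCLM_apply,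
      exp_mulVec_eigen he, smul_comm, smul_assoc]
    rw [smul_comm]
  calc ((Real.sqrt (4 * Real.pi * β))⁻¹ •
      ∫ t in (-t_c)..t_c, Real.exp (-t ^ 2 / (4 * β)) •
        NormedSpace.exp ((-(t : ℂ) * Complex.I) • H)).mulVec v
      = (Real.sqrt (4 * Real.pi * β))⁻¹ •
        ((∫ t in (-t_c)..t_c, Real.exp (-t ^ 2 / (4 * β)) •
          NormedSpace.exp ((-(t : ℂ) * Complex.I) • H)).mulVec v) := by
        rw [← mulVecCLM_apply, ContinuousLinearMap.map_smul_of_tower, mulVecCLM_apply]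
    _ = (Real.sqrt (4 * Real.pi * β))⁻¹ •
        ∫ t in (-t_c)..t_c, (Real.exp (-t ^ 2 / (4 * β)) •
          Complex.exp (-(t : ℂ) * Complex.I * μ)) • v := by
        rw [← mulVecCLM_apply, ← ContinuousLinearMap.intervalIntegral_comp_comm _ hint]
        simp_rw [mulVecCLM_apply, key]
    _ = ((Real.sqrt (4 * Real.pi * β))⁻¹ •
        ∫ t in (-t_c)..t_c, Real.exp (-t ^ 2 / (4 * β)) •
          Complex.exp (-(t : ℂ) * Complex.I * μ)) • v := by
        rw [intervalIntegral.integral_smul_const, smul_assoc]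

open Set in
section

lemma gauss_tail {β t_c : ℝ} (hβ : 0 < β) (ht : 0 ≤ t_c) :
    ∫ t in Ioi t_c, Real.exp (-(4*β)⁻¹ * t ^ 2)
      ≤ Real.sqrt (Real.pi * β) * Real.exp (-t_c ^ 2 / (4 * β)) := by
  have ha : 0 < (4*β)⁻¹ := by positivity
  have hg : Integrable (fun t : ℝ => Real.exp (-(4*β)⁻¹ * t ^ 2)) :=
    integrable_exp_neg_mul_sq ha
  have htr : ∫ x in Ioi (0:ℝ), Real.exp (-(4*β)⁻¹ * (x + t_c) ^ 2)
      = ∫ t in Ioi t_c, Real.exp (-(4*β)⁻¹ * t ^ 2) := by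
    have := (measurePreserving_add_right volume t_c).setIntegral_preimage_emb
      (measurableEmbedding_addRight t_c)
      (fun t => Real.exp (-(4*β)⁻¹ * t ^ 2)) (Ioi t_c)
    simpa using this
  rw [← htr]
  have hmono : ∫ x in Ioi (0:ℝ), Real.exp (-(4*β)⁻¹ * (x + t_c) ^ 2)
      ≤ ∫ x in Ioi (0:ℝ), Real.exp (-t_c ^ 2 / (4 * β)) * Real.exp (-(4*β)⁻¹ * x ^ 2) := by
    apply setIntegral_mono_on
    · exact (hg.comp_add_right t_c).integrableOn
    · exact (hg.const_mul _).integrableOn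
    · exact measurableSet_Ioi
    · intro x hx
      rw [← Real.exp_add]
      apply Real.exp_le_exp.2
      have hx' : (0:ℝ) ≤ x := le_of_lt hx
      rw [div_eq_mul_inv]
      nlinarith [mul_nonneg (mul_nonneg hx' ht) ha.le]
  refine hmono.trans ?_
  rw [integral_const_mul, integral_gaussian_Ioi]
  have : Real.sqrt (Real.pi / (4*β)⁻¹) = 2 * Real.sqrt (Real.pi * β) := by
    rw [show Real.pi / (4*β)⁻¹ = Real.pi * (4*β) by field_simp, show Real.pi * (4*β) = 4 * (Real.pi * β) by ring,
      Real.sqrt_mul (by norm_num), show (4:ℝ) = 2^2 by norm_num, Real.sqrt_sq (by norm_num)]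
  rw [this]
  ring_nf
  nlinarith [Real.exp_pos (-t_c^2/(4*β)), Real.sqrt_nonneg (Real.pi * β),
    Real.exp_pos (-(t_c^2)*(4*β)⁻¹)]

open Complex in
lemma scalar_bound {β t_c Δ : ℝ} (hβ : 0 < β) (ht : 0 ≤ t_c) (hΔ : 0 ≤ Δ)
    (μ : ℝ) (hμ : Δ ≤ |μ|) :
    ‖(Real.sqrt (4 * Real.pi * β))⁻¹ •
      ∫ t in (-t_c)..t_c, Real.exp (-t ^ 2 / (4 * β)) • Complex.exp (-(t : ℂ) * Complex.I * μ)‖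
    ≤ Real.exp (-β * Δ ^ 2) + Real.exp (-t_c ^ 2 / (4 * β)) := by
  set b : ℂ := -(((4*β)⁻¹ : ℝ) : ℂ) with hb
  set F : ℝ → ℂ := fun t => Complex.exp (b * t ^ 2 + (-(μ:ℂ) * Complex.I) * t + 0) with hF
  have hbre : b.re < 0 := by
    simp [hb]
    positivity
  have hFeq : ∀ t : ℝ, Real.exp (-t ^ 2 / (4 * β)) • Complex.exp (-(t : ℂ) * Complex.I * μ)
      = F t := by
    intro t
    rw [hF, Complex.real_smul, Complex.ofReal_exp, ← Complex.exp_add]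
    rw [hb]
    congr 1
    push_cast
    ring
  have hInt : Integrable F := integrable_cexp_quadratic' hbre _ _
  have hfull : ∫ t : ℝ, F t
      = ((Real.sqrt (4 * Real.pi * β)) : ℂ) * Complex.exp (-(β * μ ^ 2 : ℝ)) := by
    rw [hF, integral_cexp_quadratic hbre]
    congr 1
    · have h1 : (↑Real.pi / -b : ℂ) = ((4 * Real.pi * β : ℝ) : ℂ) := by
        rw [hb]
        push_cast
        field_simp
      rw [h1, Real.sqrt_eq_rpow, Complex.ofReal_cpow (by positivity)]
      norm_num
    · congr 1
      rw [hb]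
      have hβ' : (β : ℂ) ≠ 0 := by exact_mod_cast hβ.ne'
      push_cast
      field_simp
      ring_nf
      simp [Complex.I_sq]
  have hg : Integrable (fun t : ℝ => Real.exp (-(4*β)⁻¹ * t ^ 2)) :=
    integrable_exp_neg_mul_sq (by positivity)
  have hnormF : ∀ t : ℝ, ‖F t‖ = Real.exp (-(4*β)⁻¹ * t ^ 2) := by
    intro t
    rw [hF, Complex.norm_exp]
    congr 1
    simp [hb, ← Complex.ofReal_pow]
  have hle : -t_c ≤ t_c := by linarith
  have htail2 : ∫ t in (Ioc (-t_c) t_c)ᶜ, ‖F t‖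
      ≤ 2 * Real.sqrt (Real.pi * β) * Real.exp (-t_c ^ 2 / (4 * β)) := by
    simp_rw [hnormF]
    have hcompl : (Set.Ioc (-t_c) t_c)ᶜ = Set.Iic (-t_c) ∪ Set.Ioi t_c := by
      ext x
      simp only [Set.mem_compl_iff, Set.mem_Ioc, not_and_or, not_lt, not_le, Set.mem_union,
        Set.mem_Iic, Set.mem_Ioi]
    rw [hcompl,
      setIntegral_union (Set.Iic_disjoint_Ioi hle) measurableSet_Ioi
        hg.integrableOn hg.integrableOn]
    have hIic : ∫ t in Set.Iic (-t_c), Real.exp (-(4*β)⁻¹ * t ^ 2)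
        = ∫ t in Ioi t_c, Real.exp (-(4*β)⁻¹ * t ^ 2) := by
      have h2 := integral_comp_neg_Iic (-t_c) (fun t : ℝ => Real.exp (-(4*β)⁻¹ * t ^ 2))
      simp only [neg_neg, neg_sq] at h2
      exact h2
    rw [hIic]
    have := gauss_tail hβ ht
    linarith
  have habsfull : ‖∫ t : ℝ, F t‖
      = Real.sqrt (4 * Real.pi * β) * Real.exp (-(β * μ ^ 2)) := by
    rw [hfull, norm_mul, Complex.norm_real, Real.norm_of_nonneg (Real.sqrt_nonneg _),
      Complex.norm_exp]
    norm_num [← Complex.ofReal_pow]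
  simp_rw [hFeq]
  rw [intervalIntegral.integral_of_le hle]
  have hsplit : ∫ t in Set.Ioc (-t_c) t_c, F t
      = (∫ t : ℝ, F t) - ∫ t in (Set.Ioc (-t_c) t_c)ᶜ, F t := by
    have h3 := integral_add_compl (measurableSet_Ioc (a := -t_c) (b := t_c)) hInt
    linear_combination h3
  set c : ℝ := (Real.sqrt (4 * Real.pi * β))⁻¹ with hcdef
  have hs : 0 < Real.sqrt (4 * Real.pi * β) := Real.sqrt_pos.2 (by positivity)
  have hc : 0 ≤ c := by positivity
  rw [hsplit, Complex.real_smul, norm_mul, Complex.norm_real, Real.norm_of_nonneg hc]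
  have hB : ‖∫ t in (Set.Ioc (-t_c) t_c)ᶜ, F t‖
      ≤ 2 * Real.sqrt (Real.pi * β) * Real.exp (-t_c ^ 2 / (4 * β)) :=
    le_trans (norm_integral_le_integral_norm F) htail2
  have htri : ‖(∫ t : ℝ, F t) - ∫ t in (Set.Ioc (-t_c) t_c)ᶜ, F t‖
      ≤ Real.sqrt (4 * Real.pi * β) * Real.exp (-(β * μ ^ 2))
        + 2 * Real.sqrt (Real.pi * β) * Real.exp (-t_c ^ 2 / (4 * β)) := by
    refine le_trans (norm_sub_le _ _) ?_
    rw [habsfull]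
    exact add_le_add_right hB _
  have hsqrt4 : Real.sqrt (4 * Real.pi * β) = 2 * Real.sqrt (Real.pi * β) := by
    rw [show (4:ℝ) * Real.pi * β = 2^2 * (Real.pi * β) by ring,
      Real.sqrt_mul (by norm_num), Real.sqrt_sq (by norm_num)]
  have hcμ : c * (Real.sqrt (4 * Real.pi * β) * Real.exp (-(β * μ ^ 2))
        + 2 * Real.sqrt (Real.pi * β) * Real.exp (-t_c ^ 2 / (4 * β)))
      = Real.exp (-(β * μ ^ 2)) + Real.exp (-t_c ^ 2 / (4 * β)) := by
    rw [hcdef, hsqrt4]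
    field_simp
  have hexpμ : Real.exp (-(β * μ ^ 2)) ≤ Real.exp (-β * Δ ^ 2) := by
    apply Real.exp_le_exp.2
    nlinarith [_root_.sq_abs μ, sq_le_sq' (by linarith [abs_nonneg μ] : -|μ| ≤ Δ) hμ]
  calc c * ‖(∫ t : ℝ, F t) - ∫ t in (Set.Ioc (-t_c) t_c)ᶜ, F t‖
      ≤ c * (Real.sqrt (4 * Real.pi * β) * Real.exp (-(β * μ ^ 2))
        + 2 * Real.sqrt (Real.pi * β) * Real.exp (-t_c ^ 2 / (4 * β))) :=
        mul_le_mul_of_nonneg_left htri hc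
    _ = Real.exp (-(β * μ ^ 2)) + Real.exp (-t_c ^ 2 / (4 * β)) := hcμ
    _ ≤ Real.exp (-β * Δ ^ 2) + Real.exp (-t_c ^ 2 / (4 * β)) := by
        exact add_le_add_left hexpμ _

end

/-- **Damping property of the Gaussian-filter AGSP (Proposition 6).** For Hermitian
`H`, `β > 0`, `t_c ≥ 0`, `Δ ≥ 0` and
`K = (4πβ)^{−1/2} ∫_{−t_c}^{t_c} e^{−t²/(4β)} e^{−itH} dt`, any vector `w` in the span of
eigenvectors of `H` with eigenvalues of absolute value `≥ Δ` satisfies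
`‖Kw‖ ≤ (e^{−βΔ²} + e^{−t_c²/(4β)})‖w‖` (Euclidean norms); in particular for
`t_c = 2βΔ`, `‖Kw‖ ≤ 2e^{−βΔ²}‖w‖`. -/
theorem stmt_15 {n : ℕ} (H : Matrix (Fin n) (Fin n) ℂ) (hH : H.IsHermitian)
    (β : ℝ) (hβ : 0 < β) (t_c Δ : ℝ) (ht : 0 ≤ t_c) (hΔ : 0 ≤ Δ)
    (K : Matrix (Fin n) (Fin n) ℂ)
    (hK : K = (Real.sqrt (4 * Real.pi * β))⁻¹ •
      ∫ t in (-t_c)..t_c, Real.exp (-t ^ 2 / (4 * β)) •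
        NormedSpace.exp ((-(t : ℂ) * Complex.I) • H))
    (w : Fin n → ℂ)
    (hw : w ∈ Submodule.span ℂ
      {v : Fin n → ℂ | ∃ μ : ℂ, Δ ≤ ‖μ‖ ∧ H.mulVec v = μ • v}) :
    Real.sqrt (∑ i : Fin n, ‖K.mulVec w i‖ ^ 2)
      ≤ (Real.exp (-β * Δ ^ 2) + Real.exp (-t_c ^ 2 / (4 * β))) *
          Real.sqrt (∑ i : Fin n, ‖w i‖ ^ 2) ∧
    (t_c = 2 * β * Δ →
      Real.sqrt (∑ i : Fin n, ‖K.mulVec w i‖ ^ 2)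
        ≤ 2 * Real.exp (-β * Δ ^ 2) * Real.sqrt (∑ i : Fin n, ‖w i‖ ^ 2)) := by
  classical
  set B := hH.eigenvectorBasis with hB
  set lam := hH.eigenvalues with hlam
  set M : ℝ := Real.exp (-β * Δ ^ 2) + Real.exp (-t_c ^ 2 / (4 * β)) with hM
  have hM0 : 0 ≤ M := by positivity
  set s : ℝ → ℂ := fun μ => (Real.sqrt (4 * Real.pi * β))⁻¹ •
      ∫ t in (-t_c)..t_c, Real.exp (-t ^ 2 / (4 * β)) • Complex.exp (-(t : ℂ) * Complex.I * μ)
    with hs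
  let W : EuclideanSpace ℂ (Fin n) := WithLp.toLp 2 w
  let T : EuclideanSpace ℂ (Fin n) →ₗ[ℂ] EuclideanSpace ℂ (Fin n) :=
    { toFun := fun x => WithLp.toLp 2 (K.mulVec x)
      map_add' := fun x y => by simp [Matrix.mulVec_add]
      map_smul' := fun r x => by simp [Matrix.mulVec_smul] }
  let c : Fin n → ℂ := fun j => B.repr W j
  -- orthogonality : coefficients vanish on small eigenvalues
  have hc0 : ∀ j, |lam j| < Δ → c j = 0 := by
    intro j hj
    let φ : (Fin n → ℂ) →ₗ[ℂ] ℂ :=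
      { toFun := fun x => dotProduct (star (⇑(B j) : Fin n → ℂ)) x
        map_add' := fun x y => dotProduct_add _ x y
        map_smul' := fun r x => dotProduct_smul r _ x }
    have hker : w ∈ LinearMap.ker φ := by
      refine Submodule.span_le.2 ?_ hw
      rintro v ⟨μ, hμabs, heig⟩
      simp only [SetLike.mem_coe, LinearMap.mem_ker]
      have e1 : φ (H.mulVec v) = μ * φ v := by
        rw [heig]
        simpa using (dotProduct_smul μ (star (⇑(B j) : Fin n → ℂ)) v)
      have e2 : φ (H.mulVec v) = ((lam j : ℝ) : ℂ) * φ v := by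
        show dotProduct (star (⇑(B j) : Fin n → ℂ)) (H.mulVec v) = _
        rw [Matrix.dotProduct_mulVec]
        have hvm : Matrix.vecMul (star (⇑(B j) : Fin n → ℂ)) H
            = star (H.mulVec (⇑(B j) : Fin n → ℂ)) := by
          rw [Matrix.star_mulVec, hH.eq]
        rw [hvm, hH.mulVec_eigenvectorBasis j]
        rw [star_smul, smul_dotProduct]
        simp [Complex.real_smul, φ]
        rfl
      have hne : μ ≠ ((lam j : ℝ) : ℂ) := by
        intro he
        rw [he, Complex.norm_real, Real.norm_eq_abs] at hμabs
        exact absurd hμabs (not_le.2 hj)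
      have := e1.symm.trans e2
      have hz : (μ - ((lam j : ℝ) : ℂ)) * φ v = 0 := by ring_nf; linear_combination this
      rcases mul_eq_zero.1 hz with h | h
      · exact absurd (sub_eq_zero.1 h) hne
      · exact h
    have : c j = φ w := by
      show B.repr W j = _
      rw [B.repr_apply_apply, EuclideanSpace.inner_eq_star_dotProduct, dotProduct_comm]
      rfl
    rw [this]
    exact LinearMap.mem_ker.1 hker
  -- action of K on the eigenbasis
  have hKB : ∀ j, T (B j) = s (lam j) • B j := by
    intro j
    have heig : H.mulVec (⇑(B j) : Fin n → ℂ) = ((lam j : ℝ) : ℂ) • (⇑(B j) : Fin n → ℂ) := by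
      rw [hH.mulVec_eigenvectorBasis j]
      funext i
      simp [Complex.real_smul]
      rfl
    show WithLp.toLp 2 (K.mulVec (⇑(B j) : Fin n → ℂ)) = s (lam j) • (B j)
    rw [hK, K_mulVec_eigen β t_c hβ heig]
    rfl
  -- decompose
  let d : Fin n → ℂ := fun j => s (lam j) * c j
  have hTW : T W = B.repr.symm (WithLp.toLp 2 d) := by
    conv_lhs => rw [← B.sum_repr W]
    rw [map_sum]
    simp_rw [_root_.map_smul T, hKB]
    rw [← B.sum_repr_symm]
    congr 1
    funext j
    rw [smul_smul, mul_comm]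
  -- norms
  have hnw : Real.sqrt (∑ i : Fin n, ‖w i‖ ^ 2) = ‖W‖ := (EuclideanSpace.norm_eq W).symm
  have hnKw : Real.sqrt (∑ i : Fin n, ‖K.mulVec w i‖ ^ 2) = ‖T W‖ :=
    (EuclideanSpace.norm_eq (T W)).symm
  have hWc : ‖W‖ = Real.sqrt (∑ j : Fin n, ‖c j‖ ^ 2) := by
    rw [← B.repr.norm_map W]
    exact EuclideanSpace.norm_eq (B.repr W)
  have hTWd : ‖T W‖ = Real.sqrt (∑ j : Fin n, ‖d j‖ ^ 2) := by
    rw [hTW, LinearIsometryEquiv.norm_map]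
    exact EuclideanSpace.norm_eq (WithLp.toLp 2 d)
  -- pointwise bound
  have hpt : ∀ j, ‖d j‖ ^ 2 ≤ M ^ 2 * ‖c j‖ ^ 2 := by
    intro j
    by_cases hcj : c j = 0
    · simp [d, hcj]
    · have hjge : Δ ≤ |lam j| := by
        by_contra hlt
        exact hcj (hc0 j (not_le.1 hlt))
      have hsb : ‖s (lam j)‖ ≤ M := by
        rw [hs, hM]
        exact scalar_bound hβ ht hΔ (lam j) hjge
      have : ‖d j‖ ≤ M * ‖c j‖ := by
        rw [show d j = s (lam j) * c j from rfl, norm_mul]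
        exact mul_le_mul_of_nonneg_right hsb (norm_nonneg _)
      calc ‖d j‖ ^ 2 ≤ (M * ‖c j‖) ^ 2 := by
            apply pow_le_pow_left₀ (norm_nonneg _) this
        _ = M ^ 2 * ‖c j‖ ^ 2 := by ring
  have main : Real.sqrt (∑ i : Fin n, ‖K.mulVec w i‖ ^ 2)
      ≤ M * Real.sqrt (∑ i : Fin n, ‖w i‖ ^ 2) := by
    rw [hnKw, hnw, hTWd, hWc]
    have h1 : ∑ j : Fin n, ‖d j‖ ^ 2 ≤ M ^ 2 * ∑ j : Fin n, ‖c j‖ ^ 2 := by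
      rw [Finset.mul_sum]
      exact Finset.sum_le_sum fun j _ => hpt j
    calc Real.sqrt (∑ j : Fin n, ‖d j‖ ^ 2)
        ≤ Real.sqrt (M ^ 2 * ∑ j : Fin n, ‖c j‖ ^ 2) := Real.sqrt_le_sqrt h1
      _ = M * Real.sqrt (∑ j : Fin n, ‖c j‖ ^ 2) := by
          rw [Real.sqrt_mul (sq_nonneg M), Real.sqrt_sq hM0]
  constructor
  · exact main
  · intro htc
    have hMe : M = 2 * Real.exp (-β * Δ ^ 2) := by
      rw [hM, htc]
      have : -(2 * β * Δ) ^ 2 / (4 * β) = -β * Δ ^ 2 := by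
        field_simp
        ring
      rw [this]
      ring
    rw [← hMe]
    exact main
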